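/- Let r ≥ 3 and let G be a linear r-graph with an edge e = {u_1,...,u_r} such that d(u_i) ≥ (r-i)(r-1) + 2 for each 2 ≤ i ≤ r - 1, d(u_r) ≥ 2, and d(u_1) ≥ (r-1)^2 + 2. Then G contains a copy of the r-crown C_{1r}: one can greedily choose, for i from r down to 1, a u_i-edge e_{r-i+1} ≠ e disjoint from the previously chosen edges, yielding r pairwise disjoint edges each meeting e in exactly one vertex. -/

import Mathlib

open Finset

/-- A linear `r`-uniform hypergraph: every edge has `r` vertices and
any two distinct edges intersect in at most one vertex. -/
def IsLinear {V : Type*} [DecidableEq V] (r : ℕ) (E : Finset (Finset V)) : Prop :=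
  (∀ e ∈ E, e.card = r) ∧ ∀ e ∈ E, ∀ f ∈ E, e ≠ f → (e ∩ f).card ≤ 1

/-- The degree of a vertex: the number of edges containing it. -/
def degree {V : Type*} [DecidableEq V] (E : Finset (Finset V)) (v : V) : ℕ :=
  (E.filter (fun e => v ∈ e)).card

/-- `E` contains a copy of the `r`-crown `C_{1r}`: `r` pairwise disjoint edges
together with one edge meeting each of them in exactly one vertex. -/
def HasCrown {V : Type*} [DecidableEq V] (r : ℕ) (E : Finset (Finset V)) : Prop :=
  ∃ e ∈ E, ∃ f : Fin r → Finset V,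
    (∀ i, f i ∈ E) ∧ (∀ i, f i ≠ e) ∧
    (∀ i j, i ≠ j → f i ∩ f j = ∅) ∧
    (∀ i, (e ∩ f i).card = 1)

/-- `E` contains a copy of `C*`: `r-2` edges pairwise meeting exactly in a common
vertex `v`, two further edges disjoint from each other and from all the others,
and one edge meeting each of the `r` edges in exactly one vertex, avoiding `v`. -/
def HasCStar {V : Type*} [DecidableEq V] (r : ℕ) (E : Finset (Finset V)) : Prop :=
  ∃ v : V, ∃ e ∈ E, ∃ f : Fin r → Finset V,
    (∀ i, f i ∈ E) ∧ (∀ i, f i ≠ e) ∧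
    (∀ i : Fin r, (i : ℕ) < r - 2 → v ∈ f i) ∧
    (∀ i j : Fin r, (i : ℕ) < r - 2 → (j : ℕ) < r - 2 → i ≠ j → f i ∩ f j = {v}) ∧
    (∀ i j : Fin r, r - 2 ≤ (i : ℕ) → i ≠ j → f i ∩ f j = ∅) ∧
    (∀ i, (e ∩ f i).card = 1) ∧ v ∉ e

lemma block_bound {V : Type*} [DecidableEq V]
    (r : ℕ) (E : Finset (Finset V)) (hlin : IsLinear r E)
    (e : Finset V) (heE : e ∈ E) (x : V) (hx : x ∈ e)
    (f : Finset V) (hfE : f ∈ E) (hxf : x ∉ f)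
    (hfe : (f ∩ e).Nonempty) :
    ((E.filter (fun g => x ∈ g)).filter (fun g => g ≠ e ∧ (g ∩ f).Nonempty)).card ≤ r - 1 := by
  have hsub : (E.filter (fun g => x ∈ g)).filter (fun g => g ≠ e ∧ (g ∩ f).Nonempty)
      ⊆ (f \ e).biUnion (fun w => (E.filter (fun g => x ∈ g)).filter (fun g => w ∈ g)) := by
    intro g hg
    simp only [mem_filter] at hg
    obtain ⟨⟨hgE, hxg⟩, hgne, w, hw⟩ := hg
    rw [mem_inter] at hw
    refine mem_biUnion.2 ⟨w, ?_, ?_⟩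
    · rw [mem_sdiff]
      refine ⟨hw.2, fun hwe => ?_⟩
      have hxw : x ≠ w := fun h => hxf (h ▸ hw.2)
      have h2 : 2 ≤ (g ∩ e).card := by
        have hss : ({x, w} : Finset V) ⊆ g ∩ e := by
          intro y hy; rw [mem_insert, mem_singleton] at hy
          rcases hy with rfl | rfl <;> simp [mem_inter, hxg, hx, hw.1, hwe]
        calc 2 = ({x, w} : Finset V).card := (card_pair hxw).symm
        _ ≤ _ := card_le_card hss
      have := hlin.2 g hgE e heE hgne
      omega
    · simp [mem_filter, hgE, hxg, hw.1]
  have hcard : ∀ w ∈ f \ e, ((E.filter (fun g => x ∈ g)).filter (fun g => w ∈ g)).card ≤ 1 := by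
    intro w hw
    rw [mem_sdiff] at hw
    rw [card_le_one]
    intro a ha b hb
    simp only [mem_filter] at ha hb
    by_contra hab
    have hxw : x ≠ w := fun h => hw.2 (h ▸ hx)
    have h2 : 2 ≤ (a ∩ b).card := by
      have hss : ({x, w} : Finset V) ⊆ a ∩ b := by
        intro y hy; rw [mem_insert, mem_singleton] at hy
        rcases hy with rfl | rfl <;> simp [mem_inter, ha.1.2, ha.2, hb.1.2, hb.2]
      calc 2 = ({x, w} : Finset V).card := (card_pair hxw).symm
      _ ≤ _ := card_le_card hss
    have := hlin.2 a ha.1.1 b hb.1.1 hab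
    omega
  calc _ ≤ ((f \ e).biUnion (fun w => (E.filter (fun g => x ∈ g)).filter (fun g => w ∈ g))).card :=
        card_le_card hsub
    _ ≤ ∑ w ∈ f \ e, ((E.filter (fun g => x ∈ g)).filter (fun g => w ∈ g)).card := card_biUnion_le
    _ ≤ ∑ _w ∈ f \ e, 1 := sum_le_sum hcard
    _ = (f \ e).card := by simp
    _ ≤ r - 1 := by
        have h1 := card_sdiff_add_card_inter f e
        have h2 : f.card = r := hlin.1 f hfE
        have h3 : 1 ≤ (f ∩ e).card := card_pos.2 hfe
        omega

lemma exists_good_edge {V : Type*} [DecidableEq V]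
    (r : ℕ) (E : Finset (Finset V)) (hlin : IsLinear r E)
    (e : Finset V) (he : e ∈ E) (x : V) (hx : x ∈ e)
    (F : Finset (Finset V))
    (hF : ∀ f ∈ F, f ∈ E ∧ f ≠ e ∧ x ∉ f ∧ (f ∩ e).Nonempty)
    (hdeg : F.card * (r - 1) + 2 ≤ degree E x) :
    ∃ g ∈ E, x ∈ g ∧ g ≠ e ∧ ∀ f ∈ F, g ∩ f = ∅ := by
  classical
  set A := E.filter (fun g => x ∈ g) with hA
  set bad := A.filter (fun g => g = e ∨ ∃ f ∈ F, (g ∩ f).Nonempty) with hbad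
  have hsub : bad ⊆ insert e (F.biUnion (fun f => A.filter (fun g => g ≠ e ∧ (g ∩ f).Nonempty))) := by
    intro g hg
    rw [hbad, mem_filter] at hg
    rcases hg.2 with rfl | ⟨f, hfF, hgf⟩
    · exact mem_insert_self _ _
    · by_cases hge : g = e
      · exact hge ▸ mem_insert_self _ _
      · exact mem_insert_of_mem (mem_biUnion.2 ⟨f, hfF, mem_filter.2 ⟨hg.1, hge, hgf⟩⟩)
  have hbadcard : bad.card ≤ 1 + F.card * (r - 1) := by
    calc bad.card ≤ _ := card_le_card hsub
      _ ≤ (F.biUnion (fun f => A.filter (fun g => g ≠ e ∧ (g ∩ f).Nonempty))).card + 1 :=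
          card_insert_le _ _
      _ ≤ (∑ f ∈ F, (A.filter (fun g => g ≠ e ∧ (g ∩ f).Nonempty)).card) + 1 := by
          gcongr; exact card_biUnion_le
      _ ≤ (∑ _f ∈ F, (r - 1)) + 1 := by
          gcongr with f hf
          exact block_bound r E hlin e he x hx f (hF f hf).1 (hF f hf).2.2.1 (hF f hf).2.2.2
      _ = 1 + F.card * (r - 1) := by rw [sum_const, smul_eq_mul]; ring
  have hAcard : degree E x = A.card := rfl
  have hbadsub : bad ⊆ A := filter_subset _ _
  have hne : (A \ bad).Nonempty := by
    rw [← card_pos, card_sdiff_of_subset hbadsub]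
    omega
  obtain ⟨g, hg⟩ := hne
  rw [mem_sdiff] at hg
  obtain ⟨hgA, hgbad⟩ := hg
  rw [hA, mem_filter] at hgA
  rw [hbad, mem_filter] at hgbad
  push_neg at hgbad
  have hgbad2 := hgbad (by rw [hA, mem_filter]; exact hgA)
  refine ⟨g, hgA.1, hgA.2, hgbad2.1, fun f hf => ?_⟩
  exact hgbad2.2 f hf

/-- Greedy construction of a crown: if `e = {u_1,…,u_r}` satisfies
`d(u_1) ≥ (r-1)^2 + 2`, `d(u_i) ≥ (r-i)(r-1) + 2` for `2 ≤ i ≤ r-1` and `d(u_r) ≥ 2`,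
then there are `r` pairwise disjoint edges, the `(r-i+1)`-st being a `u_i`-edge `≠ e`,
each meeting `e` in exactly one vertex; so `G` contains `C_{1r}`.
(Here `u i` with `i : Fin r` denotes `u_{i+1}` of the paper.) -/
theorem greedy_crown {V : Type*} [DecidableEq V] [Fintype V]
    (r : ℕ) (hr : 3 ≤ r) (E : Finset (Finset V)) (hlin : IsLinear r E)
    (e : Finset V) (he : e ∈ E) (u : Fin r → V)
    (hinj : Function.Injective u) (hmem : ∀ i, u i ∈ e)
    (hd1 : (r - 1) ^ 2 + 2 ≤ degree E (u ⟨0, by omega⟩))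
    (hdmid : ∀ i : Fin r, 1 ≤ (i : ℕ) → (i : ℕ) ≤ r - 2 →
      (r - 1 - (i : ℕ)) * (r - 1) + 2 ≤ degree E (u i))
    (hdr : 2 ≤ degree E (u ⟨r - 1, by omega⟩)) :
    (∃ f : Fin r → Finset V,
      (∀ i, f i ∈ E) ∧ (∀ i, f i ≠ e) ∧ (∀ i, u i ∈ f i) ∧
      (∀ i j, i ≠ j → f i ∩ f j = ∅) ∧
      (∀ i, (e ∩ f i).card = 1)) ∧ HasCrown r E := by
  classical
  have hdeg_all : ∀ i : Fin r, (r - 1 - (i : ℕ)) * (r - 1) + 2 ≤ degree E (u i) := by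
    intro i
    rcases Nat.lt_or_ge (i : ℕ) 1 with h | h
    · have hiz : i = ⟨0, by omega⟩ := Fin.ext (show (i : ℕ) = 0 by omega)
      rw [hiz]
      calc (r - 1 - ((⟨0, by omega⟩ : Fin r) : ℕ)) * (r - 1) + 2
          = (r - 1) ^ 2 + 2 := by norm_num [sq]
        _ ≤ _ := hd1
    · rcases Nat.lt_or_ge (i : ℕ) (r - 1) with h2 | h2
      · exact hdmid i h (by omega)
      · have hir : i = ⟨r - 1, by omega⟩ :=
          Fin.ext (show (i : ℕ) = r - 1 by have := i.isLt; omega)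
        rw [hir]
        calc (r - 1 - ((⟨r - 1, by omega⟩ : Fin r) : ℕ)) * (r - 1) + 2
            = 2 := by simp
          _ ≤ _ := hdr
  have key : ∀ n, n ≤ r → ∃ f : Fin r → Finset V,
      ∀ i : Fin r, r - n ≤ (i : ℕ) →
        f i ∈ E ∧ f i ≠ e ∧ u i ∈ f i ∧ ∀ j : Fin r, (i : ℕ) < (j : ℕ) → f i ∩ f j = ∅ := by
    intro n
    induction n with
    | zero => exact fun _ => ⟨fun _ => ∅, fun i hi => absurd hi (by have := i.isLt; omega)⟩
    | succ n ih =>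
      intro hn
      obtain ⟨f, hf⟩ := ih (by omega)
      have hi0 : r - n - 1 < r := by omega
      set i0 : Fin r := ⟨r - n - 1, hi0⟩ with hi0def
      set F : Finset (Finset V) := (Finset.Ioi i0).image f with hFdef
      have hmemF : ∀ j : Fin r, (i0 : ℕ) < (j : ℕ) → f j ∈ F := by
        intro j hj
        exact mem_image.2 ⟨j, by rw [mem_Ioi]; exact hj, rfl⟩
      have hfj : ∀ j : Fin r, (i0 : ℕ) < (j : ℕ) →
          f j ∈ E ∧ f j ≠ e ∧ u j ∈ f j ∧ ∀ k : Fin r, (j : ℕ) < (k : ℕ) → f j ∩ f k = ∅ := by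
        intro j hj
        exact hf j (by simp only [hi0def] at hj; omega)
      have hinterj : ∀ j : Fin r, (i0 : ℕ) < (j : ℕ) → f j ∩ e = {u j} := by
        intro j hj
        obtain ⟨h1, h2, h3, _⟩ := hfj j hj
        have hle : (f j ∩ e).card ≤ 1 := hlin.2 _ h1 _ he h2
        have hu : u j ∈ f j ∩ e := mem_inter.2 ⟨h3, hmem j⟩
        apply Finset.eq_singleton_iff_unique_mem.2 ⟨hu, fun y hy => ?_⟩
        by_contra hne
        have : 2 ≤ (f j ∩ e).card := one_lt_card.2 ⟨y, hy, u j, hu, hne⟩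
        omega
      have hFprop : ∀ g ∈ F, g ∈ E ∧ g ≠ e ∧ u i0 ∉ g ∧ (g ∩ e).Nonempty := by
        intro g hg
        obtain ⟨j, hjI, rfl⟩ := mem_image.1 hg
        rw [mem_Ioi] at hjI
        have hj : (i0 : ℕ) < (j : ℕ) := hjI
        obtain ⟨h1, h2, h3, _⟩ := hfj j hj
        refine ⟨h1, h2, fun hmem0 => ?_, ⟨u j, mem_inter.2 ⟨h3, hmem j⟩⟩⟩
        have : u i0 ∈ f j ∩ e := mem_inter.2 ⟨hmem0, hmem i0⟩
        rw [hinterj j hj, mem_singleton] at this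
        have := hinj this
        omega
      have hFcard : F.card ≤ n := by
        calc F.card ≤ (Finset.Ioi i0).card := card_image_le
          _ = r - 1 - (i0 : ℕ) := by rw [Fin.card_Ioi] -- check name
          _ ≤ n := by simp only [hi0def]; omega
      have hdeg : F.card * (r - 1) + 2 ≤ degree E (u i0) := by
        have h1 := hdeg_all i0
        have h2 : n ≤ r - 1 - (i0 : ℕ) := by simp only [hi0def]; omega
        have : F.card * (r - 1) ≤ (r - 1 - (i0 : ℕ)) * (r - 1) :=
          Nat.mul_le_mul_right _ (le_trans hFcard h2)
        omega
      obtain ⟨g, hgE, hgu, hgne, hgdisj⟩ :=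
        exists_good_edge r E hlin e he (u i0) (hmem i0) F hFprop hdeg
      refine ⟨Function.update f i0 g, fun i hi => ?_⟩
      by_cases hii : i = i0
      · subst hii
        rw [Function.update_self]
        refine ⟨hgE, hgne, hgu, fun j hj => ?_⟩
        rw [Function.update_of_ne (by intro hji; rw [hji] at hj; omega)]
        exact hgdisj (f j) (hmemF j hj)
      · have hival : (i0 : ℕ) < (i : ℕ) := by
          have : (i : ℕ) ≠ (i0 : ℕ) := fun h => hii (Fin.ext h)
          simp only [hi0def] at this ⊢
          omega
        rw [Function.update_of_ne hii]
        obtain ⟨h1, h2, h3, h4⟩ := hfj i hival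
        refine ⟨h1, h2, h3, fun j hj => ?_⟩
        rw [Function.update_of_ne (by intro hji; rw [hji] at hj; omega)]
        exact h4 j hj
  obtain ⟨f, hf⟩ := key r le_rfl
  have hall : ∀ i : Fin r, f i ∈ E ∧ f i ≠ e ∧ u i ∈ f i ∧
      ∀ j : Fin r, (i : ℕ) < (j : ℕ) → f i ∩ f j = ∅ := fun i => hf i (by omega)
  have h4 : ∀ i j, i ≠ j → f i ∩ f j = ∅ := by
    intro i j hij
    rcases Nat.lt_or_ge (i : ℕ) (j : ℕ) with h | h
    · exact (hall i).2.2.2 j h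
    · have : (j : ℕ) < (i : ℕ) := by
        have : (i : ℕ) ≠ (j : ℕ) := fun hh => hij (Fin.ext hh)
        omega
      rw [inter_comm]
      exact (hall j).2.2.2 i this
  have h5 : ∀ i, (e ∩ f i).card = 1 := by
    intro i
    have hle : (e ∩ f i).card ≤ 1 := hlin.2 _ he _ (hall i).1 (Ne.symm (hall i).2.1)
    have hpos : 0 < (e ∩ f i).card :=
      card_pos.2 ⟨u i, mem_inter.2 ⟨hmem i, (hall i).2.2.1⟩⟩
    omega
  exact ⟨⟨f, fun i => (hall i).1, fun i => (hall i).2.1, fun i => (hall i).2.2.1, h4, h5⟩,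
    ⟨e, he, f, fun i => (hall i).1, fun i => (hall i).2.1, h4, h5⟩⟩
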